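/- Let v : ℝ → ℝ be six times continuously differentiable and x₀ ∈ ℝ. For h > 0 define the cell averages v̄_j(h) for j = −2, …, 2 and the Jiang–Shu smoothness indicators β₀(h) and β₂(h) as in the WENO scheme. Then β₀(h) − β₂(h) is O(h⁵) as h → 0⁺; in particular the WENO-Z global smoothness indicator τ₅(h) = |β₀(h) − β₂(h)| is O(h⁵) as h → 0⁺. -/

import Mathlib

open Filter Topology Asymptotics

/-- Cell average of `v` over the cell `[x₀+(j-1/2)h, x₀+(j+1/2)h]`. -/
noncomputable def cellAvg (v : ℝ → ℝ) (x₀ h j : ℝ) : ℝ :=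
  (1 / h) * ∫ t in (x₀ + (j - 1 / 2) * h)..(x₀ + (j + 1 / 2) * h), v t

/-- The Jiang–Shu smoothness indicator `β₀`. -/
noncomputable def beta0 (v : ℝ → ℝ) (x₀ h : ℝ) : ℝ :=
  (13 / 12) * (cellAvg v x₀ h (-2) - 2 * cellAvg v x₀ h (-1) + cellAvg v x₀ h 0) ^ 2
    + (1 / 4) * (cellAvg v x₀ h (-2) - 4 * cellAvg v x₀ h (-1) + 3 * cellAvg v x₀ h 0) ^ 2

/-- The Jiang–Shu smoothness indicator `β₁`. -/
noncomputable def beta1 (v : ℝ → ℝ) (x₀ h : ℝ) : ℝ :=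
  (13 / 12) * (cellAvg v x₀ h (-1) - 2 * cellAvg v x₀ h 0 + cellAvg v x₀ h 1) ^ 2
    + (1 / 4) * (cellAvg v x₀ h (-1) - cellAvg v x₀ h 1) ^ 2

/-- The Jiang–Shu smoothness indicator `β₂`. -/
noncomputable def beta2 (v : ℝ → ℝ) (x₀ h : ℝ) : ℝ :=
  (13 / 12) * (cellAvg v x₀ h 0 - 2 * cellAvg v x₀ h 1 + cellAvg v x₀ h 2) ^ 2
    + (1 / 4) * (3 * cellAvg v x₀ h 0 - 4 * cellAvg v x₀ h 1 + cellAvg v x₀ h 2) ^ 2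

open Set
open scoped Nat

/-- Taylor's theorem with a Lagrange-type uniform bound, proved by induction via the MVT. -/
lemma my_taylor_bound : ∀ (n : ℕ) (f : ℝ → ℝ), ContDiff ℝ n f → ∀ x₀ : ℝ,
    ∃ C : ℝ, 0 ≤ C ∧ ∀ y : ℝ, |y| ≤ 1 →
      |f (x₀ + y) - ∑ k ∈ Finset.range (n + 1), iteratedDeriv k f x₀ / (k ! : ℝ) * y ^ k|
        ≤ C * |y| ^ n := by
  intro n
  induction n with
  | zero =>
    intro f hf x₀
    obtain ⟨C, hC⟩ := (isCompact_Icc (a := x₀ - 1) (b := x₀ + 1)).exists_bound_of_continuousOn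
      hf.continuous.continuousOn
    have hx₀ : x₀ ∈ Icc (x₀ - 1) (x₀ + 1) := by constructor <;> linarith
    have hCnn : 0 ≤ C := by
      have := hC x₀ hx₀; simp only [Real.norm_eq_abs] at this
      have := abs_nonneg (f x₀); linarith
    refine ⟨C + |f x₀|, by have := abs_nonneg (f x₀); linarith, ?_⟩
    intro y hy
    have h1 : x₀ + y ∈ Icc (x₀ - 1) (x₀ + 1) := by
      obtain ⟨h2, h3⟩ := abs_le.mp hy; constructor <;> linarith
    have hb := hC (x₀ + y) h1
    simp only [Real.norm_eq_abs] at hb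
    have hsum : ∑ k ∈ Finset.range (0 + 1), iteratedDeriv k f x₀ / (k ! : ℝ) * y ^ k = f x₀ := by
      simp
    rw [hsum, pow_zero, mul_one]
    have habs : |f (x₀ + y) - f x₀| ≤ |f (x₀ + y)| + |f x₀| := abs_sub _ _
    linarith
  | succ n ih =>
    intro f hf x₀
    have hf' : ContDiff ℝ ((n : WithTop ℕ∞) + 1) f := by exact_mod_cast hf
    have hfd : Differentiable ℝ f := (contDiff_succ_iff_deriv.mp hf').1
    have hdf : ContDiff ℝ n (deriv f) := (contDiff_succ_iff_deriv.mp hf').2.2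
    obtain ⟨C, hC0, hC⟩ := ih (deriv f) hdf x₀
    refine ⟨C, hC0, ?_⟩
    intro y hy
    set G : ℝ → ℝ := fun z =>
      f (x₀ + z) - ∑ k ∈ Finset.range (n + 2), iteratedDeriv k f x₀ / (k ! : ℝ) * z ^ k with hGdef
    have hG0 : G 0 = 0 := by
      simp only [hGdef, add_zero]
      rw [Finset.sum_range_succ']
      simp [iteratedDeriv_zero]
    have hGd : ∀ z : ℝ, HasDerivAt G
        (deriv f (x₀ + z) - ∑ k ∈ Finset.range (n + 1),
          iteratedDeriv k (deriv f) x₀ / (k ! : ℝ) * z ^ k) z := by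
      intro z
      have h1 : HasDerivAt (fun z : ℝ => f (x₀ + z)) (deriv f (x₀ + z)) z := by
        have h2 : HasDerivAt (fun z : ℝ => x₀ + z) 1 z := by
          simpa using (hasDerivAt_id z).const_add x₀
        have := ((hfd (x₀ + z)).hasDerivAt).comp z h2; rw [mul_one] at this; exact this
      have h3 : HasDerivAt (fun z : ℝ =>
            ∑ k ∈ Finset.range (n + 2), iteratedDeriv k f x₀ / (k ! : ℝ) * z ^ k)
          (∑ k ∈ Finset.range (n + 2),
            iteratedDeriv k f x₀ / (k ! : ℝ) * ((k : ℝ) * z ^ (k - 1))) z :=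
        HasDerivAt.fun_sum fun k _ => (hasDerivAt_pow k z).const_mul _
      have h4 : ∑ k ∈ Finset.range (n + 2),
            iteratedDeriv k f x₀ / (k ! : ℝ) * ((k : ℝ) * z ^ (k - 1))
          = ∑ k ∈ Finset.range (n + 1), iteratedDeriv k (deriv f) x₀ / (k ! : ℝ) * z ^ k := by
        rw [Finset.sum_range_succ']
        simp only [Nat.cast_zero, zero_mul, mul_zero, add_zero]
        refine Finset.sum_congr rfl fun k _ => ?_
        rw [show iteratedDeriv (k + 1) f = iteratedDeriv k (deriv f) from iteratedDeriv_succ' ..]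
        have hfac : ((k + 1)! : ℝ) = (k + 1) * (k ! : ℝ) := by
          rw [Nat.factorial_succ]; push_cast; ring
        rw [hfac]
        have hk : ((k : ℝ) + 1) ≠ 0 := by positivity
        have hk2 : ((k ! : ℝ)) ≠ 0 := by positivity
        push_cast
        field_simp
      rw [← h4]
      exact h1.sub h3
    have hmem_y : y ∈ Icc (-|y|) |y| := ⟨neg_abs_le y, le_abs_self y⟩
    have hmem_0 : (0 : ℝ) ∈ Icc (-|y|) |y| := ⟨neg_nonpos.mpr (abs_nonneg y), abs_nonneg y⟩
    have hbound : ∀ z ∈ Icc (-|y|) |y|, ‖deriv G z‖ ≤ C * |y| ^ n := by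
      intro z hz
      have hzy : |z| ≤ |y| := abs_le.mpr ⟨hz.1, hz.2⟩
      have hz1 : |z| ≤ 1 := hzy.trans hy
      have := hC z hz1
      rw [(hGd z).deriv]
      calc ‖deriv f (x₀ + z) - ∑ k ∈ Finset.range (n + 1),
            iteratedDeriv k (deriv f) x₀ / (k ! : ℝ) * z ^ k‖ ≤ C * |z| ^ n := this
        _ ≤ C * |y| ^ n :=
          mul_le_mul_of_nonneg_left (pow_le_pow_left₀ (abs_nonneg z) hzy n) hC0
    have hdiff : ∀ z ∈ Icc (-|y|) |y|, DifferentiableAt ℝ G z := fun z _ =>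
      (hGd z).differentiableAt
    have := Convex.norm_image_sub_le_of_norm_deriv_le hdiff hbound (convex_Icc _ _) hmem_0 hmem_y
    rw [hG0] at this
    simp only [sub_zero, Real.norm_eq_abs] at this
    calc |f (x₀ + y) - ∑ k ∈ Finset.range (n + 1 + 1),
          iteratedDeriv k f x₀ / (k ! : ℝ) * y ^ k| = |G y| := by rw [hGdef]
      _ ≤ C * |y| ^ n * |y| := this
      _ = C * |y| ^ (n + 1) := by ring

/-- degree-5 Taylor-type polynomial with coefficients `c`. -/
noncomputable def Tpoly (c : ℕ → ℝ) (y : ℝ) : ℝ :=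
  c 0 + c 1 * y + c 2 * y ^ 2 + c 3 * y ^ 3 + c 4 * y ^ 4 + c 5 * y ^ 5

/-- an antiderivative of `Tpoly c`. -/
noncomputable def Qpoly (c : ℕ → ℝ) (y : ℝ) : ℝ :=
  c 0 * y + c 1 / 2 * y ^ 2 + c 2 / 3 * y ^ 3 + c 3 / 4 * y ^ 4 + c 4 / 5 * y ^ 5 + c 5 / 6 * y ^ 6

lemma Qpoly_hasDerivAt (c : ℕ → ℝ) (y : ℝ) : HasDerivAt (Qpoly c) (Tpoly c y) y := by
  have H : HasDerivAt (fun y : ℝ => c 0 * y ^ 1 + c 1 / 2 * y ^ 2 + c 2 / 3 * y ^ 3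
        + c 3 / 4 * y ^ 4 + c 4 / 5 * y ^ 5 + c 5 / 6 * y ^ 6)
      (c 0 * ((1:ℕ) * y ^ 0) + c 1 / 2 * ((2:ℕ) * y ^ 1) + c 2 / 3 * ((3:ℕ) * y ^ 2)
        + c 3 / 4 * ((4:ℕ) * y ^ 3) + c 4 / 5 * ((5:ℕ) * y ^ 4) + c 5 / 6 * ((6:ℕ) * y ^ 5)) y := by
    exact ((((((hasDerivAt_pow 1 y).const_mul (c 0)).add
      ((hasDerivAt_pow 2 y).const_mul (c 1 / 2))).add
      ((hasDerivAt_pow 3 y).const_mul (c 2 / 3))).add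
      ((hasDerivAt_pow 4 y).const_mul (c 3 / 4))).add
      ((hasDerivAt_pow 5 y).const_mul (c 4 / 5))).add
      ((hasDerivAt_pow 6 y).const_mul (c 5 / 6))
  have h1 : (fun y : ℝ => c 0 * y ^ 1 + c 1 / 2 * y ^ 2 + c 2 / 3 * y ^ 3
        + c 3 / 4 * y ^ 4 + c 4 / 5 * y ^ 5 + c 5 / 6 * y ^ 6) = Qpoly c := by
    funext z; simp only [Qpoly]; ring
  rw [h1] at H
  have h2 : Tpoly c y = c 0 * ((1:ℕ) * y ^ 0) + c 1 / 2 * ((2:ℕ) * y ^ 1)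
      + c 2 / 3 * ((3:ℕ) * y ^ 2) + c 3 / 4 * ((4:ℕ) * y ^ 3) + c 4 / 5 * ((5:ℕ) * y ^ 4)
      + c 5 / 6 * ((6:ℕ) * y ^ 5) := by
    simp only [Tpoly]; push_cast; ring
  rw [h2]; exact H

lemma Tpoly_continuous (c : ℕ → ℝ) (x₀ : ℝ) : Continuous fun t : ℝ => Tpoly c (t - x₀) := by
  unfold Tpoly; fun_prop

/-- the polynomial part of the cell average. -/
noncomputable def Ppoly (c : ℕ → ℝ) (j h : ℝ) : ℝ :=
  (Qpoly c ((j + 1/2) * h) - Qpoly c ((j - 1/2) * h)) / h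

/-- the error of the polynomial approximation of the cell average. -/
noncomputable def Ecell (v : ℝ → ℝ) (x₀ : ℝ) (c : ℕ → ℝ) (j h : ℝ) : ℝ :=
  cellAvg v x₀ h j - Ppoly c j h

lemma cell_err (v : ℝ → ℝ) (hv : ContDiff ℝ 6 v) (x₀ : ℝ) (j : ℝ) (hj : |j| ≤ 5/2) :
    (fun h : ℝ => Ecell v x₀ (fun k => iteratedDeriv k v x₀ / (k ! : ℝ)) j h)
      =O[𝓝[>] (0:ℝ)] fun h => h ^ 5 := by
  set c : ℕ → ℝ := fun k => iteratedDeriv k v x₀ / (k ! : ℝ) with hc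
  obtain ⟨C, hC0, hC⟩ := my_taylor_bound 5 v (hv.of_le (by norm_num)) x₀
  have hTay : ∀ y : ℝ, |y| ≤ 1 → |v (x₀ + y) - Tpoly c y| ≤ C * |y| ^ 5 := by
    intro y hy
    have hb := hC y hy
    have hs : ∑ k ∈ Finset.range (5 + 1), iteratedDeriv k v x₀ / (k ! : ℝ) * y ^ k
        = Tpoly c y := by
      simp only [Finset.sum_range_succ, Finset.sum_range_zero, Tpoly, hc]
      norm_num
    rwa [hs] at hb
  rw [isBigO_iff]
  refine ⟨243 * C, ?_⟩
  filter_upwards [Ioo_mem_nhdsGT_of_mem (by norm_num : (0:ℝ) ∈ Ico (0:ℝ) (1/3))] with h hh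
  obtain ⟨h0, h13⟩ := hh
  obtain ⟨hj1, hj2⟩ := abs_le.mp hj
  set A := x₀ + (j - 1/2) * h with hA
  set B := x₀ + (j + 1/2) * h with hB
  have hBA : B - A = h := by rw [hA, hB]; ring
  have hAB : A ≤ B := by linarith
  have hvc : Continuous v := hv.continuous
  have hTc : Continuous fun t : ℝ => Tpoly c (t - x₀) := Tpoly_continuous c x₀
  have hint : ∫ t in A..B, Tpoly c (t - x₀) = Qpoly c (B - x₀) - Qpoly c (A - x₀) := by
    refine intervalIntegral.integral_eq_sub_of_hasDerivAt
      (f := fun t => Qpoly c (t - x₀)) (fun t _ => ?_) (hTc.intervalIntegrable A B)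
    have := (Qpoly_hasDerivAt c (t - x₀)).comp t ((hasDerivAt_id t).sub_const x₀); rw [mul_one] at this; exact this
  have hsplit : ∫ t in A..B, (v t - Tpoly c (t - x₀)) =
      (∫ t in A..B, v t) - ∫ t in A..B, Tpoly c (t - x₀) :=
    intervalIntegral.integral_sub (hvc.intervalIntegrable A B) (hTc.intervalIntegrable A B)
  have hptbd : ∀ t ∈ Set.uIoc A B, ‖v t - Tpoly c (t - x₀)‖ ≤ C * (3 * h) ^ 5 := by
    intro t ht
    rw [Set.uIoc_of_le hAB] at ht
    obtain ⟨ht1, ht2⟩ := ht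
    rw [hA] at ht1
    rw [hB] at ht2
    have hy1 : t - x₀ ≤ 3 * h := by nlinarith
    have hy2 : -(3 * h) ≤ t - x₀ := by nlinarith
    have habs : |t - x₀| ≤ 3 * h := abs_le.mpr ⟨hy2, hy1⟩
    have h1 : |t - x₀| ≤ 1 := by linarith
    have hT := hTay (t - x₀) h1
    rw [show x₀ + (t - x₀) = t from by ring] at hT
    rw [Real.norm_eq_abs]
    calc |v t - Tpoly c (t - x₀)| ≤ C * |t - x₀| ^ 5 := hT
      _ ≤ C * (3 * h) ^ 5 :=
        mul_le_mul_of_nonneg_left (pow_le_pow_left₀ (abs_nonneg _) habs 5) hC0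
  have hIbd := intervalIntegral.norm_integral_le_of_norm_le_const hptbd
  have hBAabs : |B - A| = h := by rw [hBA]; exact abs_of_pos h0
  rw [hBAabs] at hIbd
  have hBx : B - x₀ = (j + 1/2) * h := by rw [hB]; ring
  have hAx : A - x₀ = (j - 1/2) * h := by rw [hA]; ring
  have hne : h ≠ 0 := ne_of_gt h0
  have hval : Ecell v x₀ c j h = (1/h) * ∫ t in A..B, (v t - Tpoly c (t - x₀)) := by
    rw [Ecell, Ppoly, hsplit, hint, ← hBx, ← hAx]
    show (1 / h) * (∫ t in (x₀ + (j - 1 / 2) * h)..(x₀ + (j + 1 / 2) * h), v t)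
      - (Qpoly c (B - x₀) - Qpoly c (A - x₀)) / h = _
    rw [← hA, ← hB]
    field_simp
  rw [hval, Real.norm_eq_abs, abs_mul]
  have h1h : |1/h| = 1/h := abs_of_pos (by positivity)
  rw [h1h]
  have hnorm : ‖∫ t in A..B, (v t - Tpoly c (t - x₀))‖
      = |∫ t in A..B, (v t - Tpoly c (t - x₀))| := rfl
  calc (1/h) * |∫ t in A..B, (v t - Tpoly c (t - x₀))|
      ≤ (1/h) * (C * (3 * h) ^ 5 * h) := by
        refine mul_le_mul_of_nonneg_left ?_ (by positivity)
        rw [← hnorm]; exact hIbd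
    _ = 243 * C * h ^ 5 := by field_simp; ring
    _ = 243 * C * ‖h ^ 5‖ := by rw [Real.norm_eq_abs, abs_of_pos (by positivity)]

lemma Ppoly_eval (c : ℕ → ℝ) (j h : ℝ) (hne : h ≠ 0) :
    Ppoly c j h = c 0 + c 1 * j * h + c 2 * (j^2 + 1/12) * h^2 + c 3 * (j^3 + j/4) * h^3
      + c 4 * (j^4 + j^2/2 + 1/80) * h^4 + c 5 * (j^5 + 5/6*j^3 + j/16) * h^5 := by
  rw [Ppoly, Qpoly, Qpoly, div_eq_iff hne]
  ring

lemma Ppoly_comb1 (c : ℕ → ℝ) (h : ℝ) (hne : h ≠ 0) :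
    (Ppoly c (-2) h - 2*Ppoly c (-1) h + Ppoly c 0 h)
      - (Ppoly c 0 h - 2*Ppoly c 1 h + Ppoly c 2 h)
    = (-12*c 3)*h^3 + (-70*c 5)*h^5 := by
  rw [Ppoly_eval c (-2) h hne, Ppoly_eval c (-1) h hne, Ppoly_eval c 0 h hne,
    Ppoly_eval c 1 h hne, Ppoly_eval c 2 h hne]
  ring

lemma Ppoly_comb2 (c : ℕ → ℝ) (h : ℝ) (hne : h ≠ 0) :
    (Ppoly c (-2) h - 2*Ppoly c (-1) h + Ppoly c 0 h)
      + (Ppoly c 0 h - 2*Ppoly c 1 h + Ppoly c 2 h)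
    = (4*c 2)*h^2 + (30*c 4)*h^4 := by
  rw [Ppoly_eval c (-2) h hne, Ppoly_eval c (-1) h hne, Ppoly_eval c 0 h hne,
    Ppoly_eval c 1 h hne, Ppoly_eval c 2 h hne]
  ring

lemma Ppoly_comb3 (c : ℕ → ℝ) (h : ℝ) (hne : h ≠ 0) :
    (Ppoly c (-2) h - 4*Ppoly c (-1) h + 3*Ppoly c 0 h)
      - (3*Ppoly c 0 h - 4*Ppoly c 1 h + Ppoly c 2 h)
    = (4*c 1)*h^1 + (-7*c 3)*h^3 + (-749/12*c 5)*h^5 := by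
  rw [Ppoly_eval c (-2) h hne, Ppoly_eval c (-1) h hne, Ppoly_eval c 0 h hne,
    Ppoly_eval c 1 h hne, Ppoly_eval c 2 h hne]
  ring

lemma Ppoly_comb4 (c : ℕ → ℝ) (h : ℝ) (hne : h ≠ 0) :
    (Ppoly c (-2) h - 4*Ppoly c (-1) h + 3*Ppoly c 0 h)
      + (3*Ppoly c 0 h - 4*Ppoly c 1 h + Ppoly c 2 h)
    = (24*c 4)*h^4 := by
  rw [Ppoly_eval c (-2) h hne, Ppoly_eval c (-1) h hne, Ppoly_eval c 0 h hne,
    Ppoly_eval c 1 h hne, Ppoly_eval c 2 h hne]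
  ring

lemma hpow_bigO (a b : ℕ) (hab : a ≤ b) :
    (fun h : ℝ => h ^ b) =O[𝓝[>] (0:ℝ)] fun h => h ^ a := by
  rw [isBigO_iff]
  refine ⟨1, ?_⟩
  filter_upwards [Ioo_mem_nhdsGT_of_mem (by norm_num : (0:ℝ) ∈ Ico (0:ℝ) 1)] with h hh
  rw [Real.norm_eq_abs, Real.norm_eq_abs, one_mul, abs_of_pos (pow_pos hh.1 _),
    abs_of_pos (pow_pos hh.1 _)]
  exact pow_le_pow_of_le_one hh.1.le hh.2.le hab

/-- `β₀(h) − β₂(h) = O(h⁵)` as `h → 0⁺`; in particular the WENO-Z global smoothness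
indicator `τ₅(h) = |β₀(h) − β₂(h)|` is `O(h⁵)` as `h → 0⁺`. -/
theorem stmt14 (v : ℝ → ℝ) (hv : ContDiff ℝ 6 v) (x₀ : ℝ) :
    ((fun h : ℝ => beta0 v x₀ h - beta2 v x₀ h) =O[𝓝[>] (0 : ℝ)] (fun h => h ^ 5)) ∧
    ((fun h : ℝ => |beta0 v x₀ h - beta2 v x₀ h|) =O[𝓝[>] (0 : ℝ)] (fun h => h ^ 5)) := by
  set c : ℕ → ℝ := fun k => iteratedDeriv k v x₀ / (k ! : ℝ) with hc
  have hEm2 := cell_err v hv x₀ (-2) (by norm_num)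
  have hEm1 := cell_err v hv x₀ (-1) (by norm_num)
  have hE0 := cell_err v hv x₀ 0 (by norm_num)
  have hEp1 := cell_err v hv x₀ 1 (by norm_num)
  have hEp2 := cell_err v hv x₀ 2 (by norm_num)
  rw [← hc] at hEm2 hEm1 hE0 hEp1 hEp2
  have hEcomb : ∀ q1 q2 q3 q4 q5 : ℝ,
      (fun h : ℝ => q1*Ecell v x₀ c (-2) h + q2*Ecell v x₀ c (-1) h + q3*Ecell v x₀ c 0 h
        + q4*Ecell v x₀ c 1 h + q5*Ecell v x₀ c 2 h) =O[𝓝[>] (0:ℝ)] fun h => h ^ 5 :=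
    fun q1 q2 q3 q4 q5 =>
      ((((hEm2.const_mul_left q1).add (hEm1.const_mul_left q2)).add
        (hE0.const_mul_left q3)).add (hEp1.const_mul_left q4)).add (hEp2.const_mul_left q5)
  -- the four factors
  have hS1 : (fun h : ℝ => (-12*c 3)*h^3 + (-70*c 5)*h^5
        + (1*Ecell v x₀ c (-2) h + (-2)*Ecell v x₀ c (-1) h + 0*Ecell v x₀ c 0 h
          + 2*Ecell v x₀ c 1 h + (-1)*Ecell v x₀ c 2 h))
      =O[𝓝[>] (0:ℝ)] fun h => h ^ 3 :=
    (((isBigO_refl (fun h : ℝ => h ^ 3) _).const_mul_left (-12*c 3)).add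
      ((hpow_bigO 3 5 (by norm_num)).const_mul_left (-70*c 5))).add
      ((hEcomb 1 (-2) 0 2 (-1)).trans (hpow_bigO 3 5 (by norm_num)))
  have hS2 : (fun h : ℝ => (4*c 2)*h^2 + (30*c 4)*h^4
        + (1*Ecell v x₀ c (-2) h + (-2)*Ecell v x₀ c (-1) h + 2*Ecell v x₀ c 0 h
          + (-2)*Ecell v x₀ c 1 h + 1*Ecell v x₀ c 2 h))
      =O[𝓝[>] (0:ℝ)] fun h => h ^ 2 :=
    (((isBigO_refl (fun h : ℝ => h ^ 2) _).const_mul_left (4*c 2)).add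
      ((hpow_bigO 2 4 (by norm_num)).const_mul_left (30*c 4))).add
      ((hEcomb 1 (-2) 2 (-2) 1).trans (hpow_bigO 2 5 (by norm_num)))
  have hS3 : (fun h : ℝ => (4*c 1)*h^1 + (-7*c 3)*h^3 + (-749/12*c 5)*h^5
        + (1*Ecell v x₀ c (-2) h + (-4)*Ecell v x₀ c (-1) h + 0*Ecell v x₀ c 0 h
          + 4*Ecell v x₀ c 1 h + (-1)*Ecell v x₀ c 2 h))
      =O[𝓝[>] (0:ℝ)] fun h => h ^ 1 :=
    ((((isBigO_refl (fun h : ℝ => h ^ 1) _).const_mul_left (4*c 1)).add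
      ((hpow_bigO 1 3 (by norm_num)).const_mul_left (-7*c 3))).add
      ((hpow_bigO 1 5 (by norm_num)).const_mul_left (-749/12*c 5))).add
      ((hEcomb 1 (-4) 0 4 (-1)).trans (hpow_bigO 1 5 (by norm_num)))
  have hS4 : (fun h : ℝ => (24*c 4)*h^4
        + (1*Ecell v x₀ c (-2) h + (-4)*Ecell v x₀ c (-1) h + 6*Ecell v x₀ c 0 h
          + (-4)*Ecell v x₀ c 1 h + 1*Ecell v x₀ c 2 h))
      =O[𝓝[>] (0:ℝ)] fun h => h ^ 4 :=
    ((isBigO_refl (fun h : ℝ => h ^ 4) _).const_mul_left (24*c 4)).add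
      ((hEcomb 1 (-4) 6 (-4) 1).trans (hpow_bigO 4 5 (by norm_num)))
  have hP12 := hS1.mul hS2
  have hP34 := hS3.mul hS4
  rw [show (fun h : ℝ => h^3 * h^2) = fun h : ℝ => h^5 from by funext x; ring] at hP12
  rw [show (fun h : ℝ => h^1 * h^4) = fun h : ℝ => h^5 from by funext x; ring] at hP34
  have hF := (hP12.const_mul_left (13/12 : ℝ)).add (hP34.const_mul_left (1/4 : ℝ))
  -- eventual equality
  have hkey : (fun h : ℝ => beta0 v x₀ h - beta2 v x₀ h) =ᶠ[𝓝[>] (0:ℝ)]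
      (fun h : ℝ =>
        (13/12 : ℝ) * (((-12*c 3)*h^3 + (-70*c 5)*h^5
          + (1*Ecell v x₀ c (-2) h + (-2)*Ecell v x₀ c (-1) h + 0*Ecell v x₀ c 0 h
            + 2*Ecell v x₀ c 1 h + (-1)*Ecell v x₀ c 2 h))
          * ((4*c 2)*h^2 + (30*c 4)*h^4
          + (1*Ecell v x₀ c (-2) h + (-2)*Ecell v x₀ c (-1) h + 2*Ecell v x₀ c 0 h
            + (-2)*Ecell v x₀ c 1 h + 1*Ecell v x₀ c 2 h)))
        + (1/4 : ℝ) * (((4*c 1)*h^1 + (-7*c 3)*h^3 + (-749/12*c 5)*h^5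
          + (1*Ecell v x₀ c (-2) h + (-4)*Ecell v x₀ c (-1) h + 0*Ecell v x₀ c 0 h
            + 4*Ecell v x₀ c 1 h + (-1)*Ecell v x₀ c 2 h))
          * ((24*c 4)*h^4
          + (1*Ecell v x₀ c (-2) h + (-4)*Ecell v x₀ c (-1) h + 6*Ecell v x₀ c 0 h
            + (-4)*Ecell v x₀ c 1 h + 1*Ecell v x₀ c 2 h)))) := by
    filter_upwards [self_mem_nhdsWithin] with h (hh : h ∈ Set.Ioi (0:ℝ))
    have hne : h ≠ 0 := ne_of_gt hh
    have hd1 : (cellAvg v x₀ h (-2) - 2*cellAvg v x₀ h (-1) + cellAvg v x₀ h 0)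
        - (cellAvg v x₀ h 0 - 2*cellAvg v x₀ h 1 + cellAvg v x₀ h 2)
        = (-12*c 3)*h^3 + (-70*c 5)*h^5
          + (1*Ecell v x₀ c (-2) h + (-2)*Ecell v x₀ c (-1) h + 0*Ecell v x₀ c 0 h
            + 2*Ecell v x₀ c 1 h + (-1)*Ecell v x₀ c 2 h) := by
      simp only [Ecell]
      linear_combination Ppoly_comb1 c h hne
    have hd2 : (cellAvg v x₀ h (-2) - 2*cellAvg v x₀ h (-1) + cellAvg v x₀ h 0)
        + (cellAvg v x₀ h 0 - 2*cellAvg v x₀ h 1 + cellAvg v x₀ h 2)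
        = (4*c 2)*h^2 + (30*c 4)*h^4
          + (1*Ecell v x₀ c (-2) h + (-2)*Ecell v x₀ c (-1) h + 2*Ecell v x₀ c 0 h
            + (-2)*Ecell v x₀ c 1 h + 1*Ecell v x₀ c 2 h) := by
      simp only [Ecell]
      linear_combination Ppoly_comb2 c h hne
    have hd3 : (cellAvg v x₀ h (-2) - 4*cellAvg v x₀ h (-1) + 3*cellAvg v x₀ h 0)
        - (3*cellAvg v x₀ h 0 - 4*cellAvg v x₀ h 1 + cellAvg v x₀ h 2)
        = (4*c 1)*h^1 + (-7*c 3)*h^3 + (-749/12*c 5)*h^5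
          + (1*Ecell v x₀ c (-2) h + (-4)*Ecell v x₀ c (-1) h + 0*Ecell v x₀ c 0 h
            + 4*Ecell v x₀ c 1 h + (-1)*Ecell v x₀ c 2 h) := by
      simp only [Ecell]
      linear_combination Ppoly_comb3 c h hne
    have hd4 : (cellAvg v x₀ h (-2) - 4*cellAvg v x₀ h (-1) + 3*cellAvg v x₀ h 0)
        + (3*cellAvg v x₀ h 0 - 4*cellAvg v x₀ h 1 + cellAvg v x₀ h 2)
        = (24*c 4)*h^4
          + (1*Ecell v x₀ c (-2) h + (-4)*Ecell v x₀ c (-1) h + 6*Ecell v x₀ c 0 h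
            + (-4)*Ecell v x₀ c 1 h + 1*Ecell v x₀ c 2 h) := by
      simp only [Ecell]
      linear_combination Ppoly_comb4 c h hne
    calc beta0 v x₀ h - beta2 v x₀ h
        = (13/12 : ℝ) * (((cellAvg v x₀ h (-2) - 2*cellAvg v x₀ h (-1) + cellAvg v x₀ h 0)
            - (cellAvg v x₀ h 0 - 2*cellAvg v x₀ h 1 + cellAvg v x₀ h 2))
          * ((cellAvg v x₀ h (-2) - 2*cellAvg v x₀ h (-1) + cellAvg v x₀ h 0)
            + (cellAvg v x₀ h 0 - 2*cellAvg v x₀ h 1 + cellAvg v x₀ h 2)))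
        + (1/4 : ℝ) * (((cellAvg v x₀ h (-2) - 4*cellAvg v x₀ h (-1) + 3*cellAvg v x₀ h 0)
            - (3*cellAvg v x₀ h 0 - 4*cellAvg v x₀ h 1 + cellAvg v x₀ h 2))
          * ((cellAvg v x₀ h (-2) - 4*cellAvg v x₀ h (-1) + 3*cellAvg v x₀ h 0)
            + (3*cellAvg v x₀ h 0 - 4*cellAvg v x₀ h 1 + cellAvg v x₀ h 2))) := by
          simp only [beta0, beta2]; ring
      _ = _ := by rw [hd1, hd2, hd3, hd4]
  have part1 : (fun h : ℝ => beta0 v x₀ h - beta2 v x₀ h) =O[𝓝[>] (0:ℝ)] fun h => h ^ 5 :=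
    hkey.trans_isBigO hF
  refine ⟨part1, ?_⟩
  simpa only [Real.norm_eq_abs] using part1.norm_left
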